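/- Let o be a discrete valuation ring with maximal ideal p and finite residue field of cardinality q, let q0 ⊆ p be a nonzero ideal with Q = [o : q0], and let τ ∈ Mat_n(o/q0) be a cyclic matrix. Then the centralizer group G_τ(o/q0) = {g ∈ GL_n(o/q0) : gτ = τg} has cardinality at least (1 − q^{−1})^n · Q^n. -/

import Mathlib

open Function

theorem card_preimage_eq {A B : Type*} [AddGroup A] [AddGroup B] (φ : A →+ B)
    (hφ : Surjective φ) (S : Set B) :
    Nat.card (φ ⁻¹' S : Set A) = Nat.card {x : A // φ x = 0} * Nat.card S := by
  rw [← Nat.card_prod]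
  have e : ({x : A // φ x = 0} × S) ≃ (φ ⁻¹' S : Set A) :=
    ⟨fun p => ⟨p.1.1 + surjInv hφ p.2.1, by
        have h1 : φ p.1.1 = 0 := p.1.2
        have h2 : φ (surjInv hφ (p.2.1 : B)) = (p.2.1 : B) := surjInv_eq hφ _
        simp only [Set.mem_preimage, map_add, h1, h2, zero_add]
        exact p.2.2⟩,
      fun x => ⟨⟨x.1 - surjInv hφ (φ x.1), by simp [surjInv_eq hφ]⟩, ⟨φ x.1, x.2⟩⟩, ?_, ?_⟩
  · exact (Nat.card_congr e).symm
  · rintro ⟨⟨z, hz⟩, ⟨y, hy⟩⟩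
    have h : φ (z + surjInv hφ y) = y := by simp [hz, surjInv_eq hφ]
    simp only [Prod.mk.injEq, Subtype.mk.injEq, h]
    constructor
    · simp
    · trivial
  · rintro ⟨x, hx⟩
    simp

theorem nat_pow_pred_le {q d : ℕ} (hq : 1 ≤ q) (hd : 1 ≤ d) : (q - 1) ^ d ≤ q ^ d - 1 := by
  calc (q - 1) ^ d = (q - 1) ^ (d - 1) * (q - 1) := by
        rw [← pow_succ]; congr 1; omega
    _ ≤ q ^ (d - 1) * (q - 1) := by
        exact Nat.mul_le_mul_right _ (Nat.pow_le_pow_left (by omega) _)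
    _ = q ^ (d - 1) * q - q ^ (d - 1) := by
        rw [Nat.mul_sub, mul_one]
    _ = q ^ d - q ^ (d - 1) := by
        rw [← pow_succ]; congr 2; omega
    _ ≤ q ^ d - 1 := Nat.sub_le_sub_left (Nat.one_le_pow _ _ (by omega)) _

theorem card_adjoinRoot {k : Type*} [Field k] [Finite k] (f : Polynomial k) (hf : f ≠ 0) :
    Nat.card (AdjoinRoot f) = Nat.card k ^ f.natDegree := by
  let pb := AdjoinRoot.powerBasis hf
  rw [Nat.card_congr pb.basis.equivFun.toEquiv, Nat.card_fun,
    Nat.card_eq_fintype_card (α := Fin pb.dim), Fintype.card_fin]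
  rfl

theorem finite_adjoinRoot {k : Type*} [Field k] [Finite k] (f : Polynomial k) (hf : f ≠ 0) :
    Finite (AdjoinRoot f) :=
  Finite.of_equiv _ (AdjoinRoot.powerBasis hf).basis.equivFun.toEquiv.symm

/-- units of a commutative monoid vs the subtype of unit elements -/
noncomputable def unitsEquivIsUnit {M : Type*} [CommMonoid M] : Mˣ ≃ {x : M // IsUnit x} where
  toFun u := ⟨u, u.isUnit⟩
  invFun x := x.2.unit
  left_inv u := by ext; rfl
  right_inv x := by ext; exact x.2.unit_spec

theorem card_units_adjoinRoot {k : Type*} [Field k] [Finite k] :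
    ∀ (N : ℕ) (f : Polynomial k), f.natDegree ≤ N → f ≠ 0 →
      (Nat.card k - 1) ^ f.natDegree ≤ Nat.card (AdjoinRoot f)ˣ := by
  have hq1 : 1 ≤ Nat.card k := Nat.card_pos
  intro N
  induction N with
  | zero =>
    intro f hdeg hf0
    -- f is a unit
    have hd0 : f.natDegree = 0 := Nat.le_zero.mp hdeg
    obtain ⟨a, ha⟩ := Polynomial.natDegree_eq_zero.mp hd0
    have ha0 : a ≠ 0 := by rintro rfl; simp at ha; exact hf0 ha.symm
    have hunit : IsUnit f := by
      rw [← ha]; exact (Polynomial.isUnit_C).mpr (isUnit_iff_ne_zero.mpr ha0)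
    have h01 : (0 : AdjoinRoot f) = 1 := by
      have : IsUnit (AdjoinRoot.mk f f) := hunit.map _
      rw [AdjoinRoot.mk_self] at this
      exact isUnit_zero_iff.mp this
    have : Subsingleton (AdjoinRoot f) := subsingleton_of_zero_eq_one h01
    rw [hd0, pow_zero]
    have : Nat.card (AdjoinRoot f)ˣ = 1 :=
      Nat.card_eq_one_iff_unique.mpr ⟨inferInstance, ⟨1⟩⟩
    omega
  | succ N ih =>
    intro f hdeg hf0
    by_cases hd0 : f.natDegree = 0
    · -- repeat base case argument
      obtain ⟨a, ha⟩ := Polynomial.natDegree_eq_zero.mp hd0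
      have ha0 : a ≠ 0 := by rintro rfl; simp at ha; exact hf0 ha.symm
      have hunit : IsUnit f := by
        rw [← ha]; exact (Polynomial.isUnit_C).mpr (isUnit_iff_ne_zero.mpr ha0)
      have h01 : (0 : AdjoinRoot f) = 1 := by
        have : IsUnit (AdjoinRoot.mk f f) := hunit.map _
        rw [AdjoinRoot.mk_self] at this
        exact isUnit_zero_iff.mp this
      have : Subsingleton (AdjoinRoot f) := subsingleton_of_zero_eq_one h01
      rw [hd0, pow_zero]
      have : Nat.card (AdjoinRoot f)ˣ = 1 :=
        Nat.card_eq_one_iff_unique.mpr ⟨inferInstance, ⟨1⟩⟩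
      omega
    · obtain ⟨g, hgirr, h, rfl⟩ :
          ∃ g, Irreducible g ∧ ∃ h, f = g * h := by
        obtain ⟨g, hgirr, hdvd⟩ := WfDvdMonoid.exists_irreducible_factor
          (Polynomial.not_isUnit_of_natDegree_pos f (by omega)) hf0
        obtain ⟨h, rfl⟩ := hdvd
        exact ⟨g, hgirr, h, rfl⟩
      have hg0 : g ≠ 0 := hgirr.ne_zero
      have hh0 : h ≠ 0 := by rintro rfl; simp at hf0
      have hdg : 1 ≤ g.natDegree := hgirr.natDegree_pos
      have hdegf : (g * h).natDegree = g.natDegree + h.natDegree :=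
        Polynomial.natDegree_mul hg0 hh0
      have hdh : h.natDegree ≤ N := by omega
      have ihh := ih h hdh hh0
      by_cases hcop : IsCoprime g h
      · -- CRT case
        have hspan : Ideal.span {g * h} = Ideal.span {g} * Ideal.span {h} :=
          (Ideal.span_singleton_mul_span_singleton g h).symm
        have hcopI : IsCoprime (Ideal.span {g} : Ideal (Polynomial k)) (Ideal.span {h}) :=
          (Ideal.isCoprime_span_singleton_iff g h).mpr hcop
        have E : AdjoinRoot (g * h) ≃+* AdjoinRoot g × AdjoinRoot h :=
          (Ideal.quotEquivOfEq hspan).trans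
            (Ideal.quotientMulEquivQuotientProd _ _ hcopI)
        have hcardeq : Nat.card (AdjoinRoot (g * h))ˣ
            = Nat.card (AdjoinRoot g)ˣ * Nat.card (AdjoinRoot h)ˣ := by
          rw [Nat.card_congr ((Units.mapEquiv E.toMulEquiv).trans MulEquiv.prodUnits).toEquiv,
            Nat.card_prod]
        have : Fact (Irreducible g) := ⟨hgirr⟩
        have : Finite (AdjoinRoot g) := finite_adjoinRoot g hg0
        have hcardg : Nat.card (AdjoinRoot g)ˣ = Nat.card k ^ g.natDegree - 1 := by
          rw [Nat.card_units, card_adjoinRoot g hg0]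
        rw [hcardeq, hdegf, pow_add]
        refine Nat.mul_le_mul ?_ ihh
        rw [hcardg]
        exact nat_pow_pred_le hq1 hdg
      · -- non-coprime: g ∣ h, nilpotent kernel
        have hgh : g ∣ h := by
          by_contra hnd
          exact hcop (hgirr.coprime_iff_not_dvd.mpr hnd)
        have hle : Ideal.span {g * h} ≤ (Ideal.span {h} : Ideal (Polynomial k)) :=
          Ideal.span_singleton_le_span_singleton.mpr (Dvd.intro_left g rfl)
        set π : AdjoinRoot (g * h) →+* AdjoinRoot h := Ideal.Quotient.factor hle with hπ
        have hπmk : ∀ p, π (AdjoinRoot.mk (g * h) p) = AdjoinRoot.mk h p := fun p =>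
          Ideal.Quotient.factor_mk hle p
        have hπsurj : Function.Surjective π := by
          intro y
          obtain ⟨p, rfl⟩ := AdjoinRoot.mk_surjective y
          exact ⟨AdjoinRoot.mk _ p, hπmk p⟩
        -- kernel elements square to zero
        have hker : ∀ z : AdjoinRoot (g * h), π z = 0 → z * z = 0 := by
          intro z hz
          obtain ⟨p, rfl⟩ := AdjoinRoot.mk_surjective z
          rw [hπmk, AdjoinRoot.mk_eq_zero] at hz
          obtain ⟨t, rfl⟩ := hz
          rw [← map_mul, AdjoinRoot.mk_eq_zero]
          obtain ⟨s, rfl⟩ := hgh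
          exact ⟨s * t * t, by ring⟩
        -- IsUnit x ↔ IsUnit (π x)
        have hunit_iff : ∀ x : AdjoinRoot (g * h), IsUnit x ↔ IsUnit (π x) := by
          intro x
          constructor
          · exact fun hx => hx.map π
          · intro hx
            obtain ⟨y, hy⟩ := hπsurj (↑hx.unit⁻¹)
            have h1 : π (x * y) = 1 := by
              rw [map_mul, hy]
              exact hx.mul_val_inv
            have h2 : π (x * y - 1) = 0 := by rw [map_sub, h1, map_one, sub_self]
            have h3 := hker _ h2
            have h4 : IsUnit (x * y) := by
              have heq : (x * y) * (2 - x * y) = 1 := by linear_combination -h3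
              exact IsUnit.of_mul_eq_one _ heq
            exact isUnit_of_mul_isUnit_left h4
        -- counting
        have hcount : Nat.card (AdjoinRoot (g * h))ˣ
            = Nat.card {z : AdjoinRoot (g * h) // π z = 0} * Nat.card (AdjoinRoot h)ˣ := by
          rw [Nat.card_congr (unitsEquivIsUnit (M := AdjoinRoot (g * h))),
            Nat.card_congr (unitsEquivIsUnit (M := AdjoinRoot h))]
          have : {x : AdjoinRoot (g * h) | IsUnit x}
              = (π ⁻¹' {y : AdjoinRoot h | IsUnit y}) := by
            ext x; exact hunit_iff x
          calc Nat.card {x : AdjoinRoot (g * h) // IsUnit x}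
              = Nat.card (π ⁻¹' {y : AdjoinRoot h | IsUnit y} : Set (AdjoinRoot (g * h))) := by
                rw [← this]; rfl
            _ = _ := card_preimage_eq π.toAddMonoidHom hπsurj _
        have hcardK : Nat.card {z : AdjoinRoot (g * h) // π z = 0} = Nat.card k ^ g.natDegree := by
          have huniv := card_preimage_eq π.toAddMonoidHom hπsurj Set.univ
          rw [Set.preimage_univ] at huniv
          have h1 : Nat.card (Set.univ : Set (AdjoinRoot (g * h))) = Nat.card k ^ (g * h).natDegree := by
            rw [Nat.card_congr (Equiv.Set.univ _), card_adjoinRoot _ hf0]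
          have h2 : Nat.card (Set.univ : Set (AdjoinRoot h)) = Nat.card k ^ h.natDegree := by
            rw [Nat.card_congr (Equiv.Set.univ _), card_adjoinRoot _ hh0]
          rw [h1, h2, hdegf, pow_add] at huniv
          have hpos : 0 < Nat.card k ^ h.natDegree := Nat.pow_pos (by omega)
          exact (Nat.eq_of_mul_eq_mul_right hpos huniv).symm
        rw [hcount, hcardK, hdegf, pow_add]
        exact Nat.mul_le_mul (Nat.pow_le_pow_left (by omega) _) ihh

theorem general_bound (R : Type*) (k' : Type*) [CommRing R] [Fintype R]
    [Field k'] [Finite k'] (res : R →+* k')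
    (hres_surj : Function.Surjective res)
    (hUnitLift : ∀ x : R, IsUnit (res x) → IsUnit x)
    (q Q : ℕ) (hq2 : 2 ≤ q)
    (hqcard : Nat.card k' = q)
    (hQ : Fintype.card R = Q) (n : ℕ) (hn : 0 < n)
    (τ : Matrix (Fin n) (Fin n) R)
    (hτ : ∃ v : Fin n → R, ∀ w, ∃ p : Polynomial R,
      (Polynomial.aeval τ p).mulVec v = w) :
    (1 - (q : ℝ)⁻¹) ^ n * (Q : ℝ) ^ n ≤
      (Set.ncard {g : Matrix (Fin n) (Fin n) R | IsUnit g ∧ g * τ = τ * g} : ℝ) := by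
  classical
  have hntR : Nontrivial R := res.domain_nontrivial
  set τb : Matrix (Fin n) (Fin n) k' := τ.map res with hτb
  have hUnitIff : ∀ M : Matrix (Fin n) (Fin n) R, IsUnit M ↔ IsUnit (M.map res) := by
    intro M
    have hdet : (M.map res).det = res M.det := by
      rw [← RingHom.mapMatrix_apply, ← RingHom.map_det]
    rw [Matrix.isUnit_iff_isUnit_det, Matrix.isUnit_iff_isUnit_det, hdet]
    exact ⟨fun h => h.map res, fun h => hUnitLift _ h⟩
  -- the coefficient-to-matrix map
  set Mc : (Fin n → R) → Matrix (Fin n) (Fin n) R :=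
    fun c => ∑ i : Fin n, c i • τ ^ (i : ℕ) with hMcdef
  have hMc_comm : ∀ c, Mc c * τ = τ * Mc c := by
    intro c
    rw [hMcdef]
    simp only [Finset.sum_mul, Finset.mul_sum]
    refine Finset.sum_congr rfl fun i _ => ?_
    rw [smul_mul_assoc, mul_smul_comm, ← pow_succ, ← pow_succ']
  have hpowmap : ∀ i : ℕ, (τ ^ i).map res = τb ^ i := by
    intro i
    rw [hτb, ← RingHom.mapMatrix_apply, ← RingHom.mapMatrix_apply, map_pow]
  have hMc_map : ∀ c, (Mc c).map res = ∑ i : Fin n, res (c i) • τb ^ (i : ℕ) := by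
    intro c
    ext j l
    simp only [hMcdef, Matrix.map_apply, Matrix.sum_apply, Matrix.smul_apply, smul_eq_mul,
      map_sum, map_mul]
    exact Finset.sum_congr rfl fun i _ => by rw [← hpowmap i, Matrix.map_apply]
  -- surjectivity / injectivity of the evaluation on a cyclic vector
  obtain ⟨v, hv⟩ := hτ
  have hLsurj : Surjective (fun c : Fin n → R => (Mc c).mulVec v) := by
    intro w
    obtain ⟨P, hP⟩ := hv w
    have hfmonic : (Matrix.charpoly τ).Monic := Matrix.charpoly_monic τ
    have hfdeg : (Matrix.charpoly τ).natDegree = n := by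
      rw [Matrix.charpoly_natDegree_eq_dim, Fintype.card_fin]
    have hf1 : Matrix.charpoly τ ≠ 1 := by
      intro h1; rw [h1, Polynomial.natDegree_one] at hfdeg; omega
    have hrdeg : (P %ₘ Matrix.charpoly τ).natDegree < n :=
      lt_of_lt_of_le (Polynomial.natDegree_modByMonic_lt P hfmonic hf1) (le_of_eq hfdeg)
    have haeval : Polynomial.aeval τ (P %ₘ Matrix.charpoly τ) = Polynomial.aeval τ P := by
      conv_rhs => rw [← Polynomial.modByMonic_add_div P (Matrix.charpoly τ)]
      rw [map_add, map_mul, Matrix.aeval_self_charpoly, zero_mul, add_zero]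
    refine ⟨fun i => (P %ₘ Matrix.charpoly τ).coeff i, ?_⟩
    have hMcr : Mc (fun i => (P %ₘ Matrix.charpoly τ).coeff i)
        = Polynomial.aeval τ (P %ₘ Matrix.charpoly τ) := by
      rw [Polynomial.aeval_eq_sum_range' hrdeg, hMcdef, ← Fin.sum_univ_eq_sum_range]
    simp only [hMcr, haeval, hP]
  have hMc_inj : Injective Mc := by
    have hLinj : Injective (fun c : Fin n → R => (Mc c).mulVec v) :=
      (Finite.injective_iff_surjective).mpr hLsurj
    intro c c' hcc
    exact hLinj (by simp only [hcc])
  -- the two coefficient sets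
  set Tk : Set (Fin n → k') := {d | IsUnit (∑ i : Fin n, d i • τb ^ (i : ℕ))} with hTkdef
  set φv : (Fin n → R) →+ (Fin n → k') :=
    { toFun := fun c i => res (c i),
      map_zero' := by funext i; simp
      map_add' := by intro a b; funext i; simp } with hφvdef
  have hφv_surj : Surjective φv := by
    intro w
    exact ⟨fun i => surjInv hres_surj (w i), funext fun i => surjInv_eq hres_surj (w i)⟩
  have hpre : φv ⁻¹' Tk = {c | IsUnit (Mc c)} := by
    ext c
    simp only [Set.mem_preimage, hTkdef, Set.mem_setOf_eq]
    rw [hUnitIff (Mc c), hMc_map c]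
    exact Iff.rfl
  have hcount1 : Nat.card (φv ⁻¹' Tk : Set (Fin n → R)) =
      Nat.card {x : Fin n → R // φv x = 0} * Nat.card Tk :=
    card_preimage_eq φv hφv_surj Tk
  set Kc := Nat.card {x : Fin n → R // φv x = 0} with hKcdef
  have hcount2 : Q ^ n = Kc * q ^ n := by
    have huniv := card_preimage_eq φv hφv_surj Set.univ
    rw [Set.preimage_univ, Nat.card_congr (Equiv.Set.univ _),
      Nat.card_congr (Equiv.Set.univ _)] at huniv
    rw [Nat.card_fun, Nat.card_fun, Nat.card_eq_fintype_card (α := Fin n), Fintype.card_fin,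
      Nat.card_eq_fintype_card (α := R), hQ, hqcard] at huniv
    exact huniv
  -- field-level lower bound via AdjoinRoot of the char polynomial
  have hTk_ge : (q - 1) ^ n ≤ Nat.card Tk := by
    have hfbmonic : (Matrix.charpoly τb).Monic := Matrix.charpoly_monic τb
    have hfbdeg : (Matrix.charpoly τb).natDegree = n := by
      rw [Matrix.charpoly_natDegree_eq_dim, Fintype.card_fin]
    have hfb0 : Matrix.charpoly τb ≠ 0 := hfbmonic.ne_zero
    set pb := AdjoinRoot.powerBasis' hfbmonic with hpbdef
    have hdim : pb.dim = n := by rw [hpbdef, AdjoinRoot.powerBasis'_dim, hfbdeg]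
    have hΘ0 : ∀ a ∈ Ideal.span {Matrix.charpoly τb},
        (Polynomial.aeval τb).toRingHom a = 0 := by
      intro a ha
      obtain ⟨t, rfl⟩ := Ideal.mem_span_singleton.mp ha
      simp only [AlgHom.toRingHom_eq_coe, RingHom.coe_coe, map_mul,
        Matrix.aeval_self_charpoly, zero_mul]
    set Θ : AdjoinRoot (Matrix.charpoly τb) →+* Matrix (Fin n) (Fin n) k' :=
      Ideal.Quotient.lift (Ideal.span {Matrix.charpoly τb})
        (Polynomial.aeval τb).toRingHom hΘ0 with hΘdef
    have hΘmk : ∀ P : Polynomial k', Θ (AdjoinRoot.mk (Matrix.charpoly τb) P)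
        = Polynomial.aeval τb P := fun P => Ideal.Quotient.lift_mk _ _ _
    have hΘsmul : ∀ (c : k') (x : AdjoinRoot (Matrix.charpoly τb)),
        Θ (c • x) = c • Θ x := by
      intro c x
      obtain ⟨P, rfl⟩ := AdjoinRoot.mk_surjective x
      rw [AdjoinRoot.smul_mk, hΘmk, hΘmk, map_smul]
    have key : ∀ u : AdjoinRoot (Matrix.charpoly τb),
        ∑ i : Fin n, (pb.basis.repr u (Fin.cast hdim.symm i)) • τb ^ (i : ℕ) = Θ u := by
      intro u
      have step1 : ∑ i : Fin n, (pb.basis.repr u (Fin.cast hdim.symm i)) • τb ^ (i : ℕ)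
          = ∑ j : Fin pb.dim, pb.basis.repr u j • Θ (pb.basis j) := by
        refine (Fintype.sum_equiv (finCongr hdim)
          (fun j => pb.basis.repr u j • Θ (pb.basis j))
          (fun i => (pb.basis.repr u (Fin.cast hdim.symm i)) • τb ^ (i : ℕ)) ?_).symm
        intro j
        have h1 : Fin.cast hdim.symm (finCongr hdim j) = j := by
          ext; simp
        have h2 : Θ (pb.basis j) = τb ^ (j : ℕ) := by
          rw [pb.basis_eq_pow j, map_pow]
          congr 1
          have hgen : pb.gen = AdjoinRoot.root (Matrix.charpoly τb) :=
            AdjoinRoot.powerBasis'_gen hfbmonic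
          rw [hgen, ← AdjoinRoot.mk_X, hΘmk, Polynomial.aeval_X]
        rw [h1, h2]
        congr 2
      rw [step1]
      conv_rhs => rw [← pb.basis.sum_repr u]
      rw [map_sum]
      exact Finset.sum_congr rfl fun j _ => by rw [hΘsmul]
    have hinj : ∀ u : (AdjoinRoot (Matrix.charpoly τb))ˣ,
        (fun i : Fin n => pb.basis.repr (u : AdjoinRoot (Matrix.charpoly τb))
          (Fin.cast hdim.symm i)) ∈ Tk := by
      intro u
      show IsUnit _
      rw [key]
      exact (Units.isUnit u).map Θ
    have hJinj : Injective (fun u : (AdjoinRoot (Matrix.charpoly τb))ˣ =>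
        (⟨_, hinj u⟩ : Tk)) := by
      intro u u' huu
      have h1 : ∀ j : Fin pb.dim, pb.basis.repr (u : AdjoinRoot (Matrix.charpoly τb)) j
          = pb.basis.repr (u' : AdjoinRoot (Matrix.charpoly τb)) j := by
        intro j
        have h0 := congrArg (fun t : Tk => (t : Fin n → k') (Fin.cast hdim j)) huu
        have hcast : Fin.cast hdim.symm (Fin.cast hdim j) = j := by ext; simp
        simpa [hcast] using h0
      have h2 : (u : AdjoinRoot (Matrix.charpoly τb)) = u' := by
        rw [← pb.basis.sum_repr (u : AdjoinRoot (Matrix.charpoly τb)),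
          ← pb.basis.sum_repr (u' : AdjoinRoot (Matrix.charpoly τb))]
        exact Finset.sum_congr rfl fun j _ => by rw [h1 j]
      exact Units.ext h2
    have hA := card_units_adjoinRoot n (Matrix.charpoly τb) (le_of_eq hfbdeg) hfb0
    rw [hqcard, hfbdeg] at hA
    calc (q - 1) ^ n ≤ Nat.card (AdjoinRoot (Matrix.charpoly τb))ˣ := hA
      _ ≤ Nat.card Tk := Nat.card_le_card_of_injective _ hJinj
  -- injection into the centralizer
  have hmain : Nat.card (φv ⁻¹' Tk : Set (Fin n → R)) ≤
      Set.ncard {g : Matrix (Fin n) (Fin n) R | IsUnit g ∧ g * τ = τ * g} := by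
    rw [← Nat.card_coe_set_eq, hpre]
    refine Nat.card_le_card_of_injective
      (fun c => ⟨Mc c.1, c.2, hMc_comm c.1⟩) ?_
    intro c c' hcc
    apply Subtype.ext
    exact hMc_inj (congrArg Subtype.val hcc)
  -- assemble
  have hchain : Kc * (q - 1) ^ n ≤
      Set.ncard {g : Matrix (Fin n) (Fin n) R | IsUnit g ∧ g * τ = τ * g} := by
    calc Kc * (q - 1) ^ n ≤ Kc * Nat.card Tk := Nat.mul_le_mul_left _ hTk_ge
      _ = Nat.card (φv ⁻¹' Tk : Set (Fin n → R)) := by rw [hcount1, hKcdef]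
      _ ≤ _ := hmain
  -- real arithmetic
  have hqR : (0 : ℝ) < (q : ℝ) := by exact_mod_cast (show 0 < q by omega)
  have hQR : (Q : ℝ) ^ n = (Kc : ℝ) * (q : ℝ) ^ n := by exact_mod_cast hcount2
  have hcast : ((q : ℝ) - 1) = ((q - 1 : ℕ) : ℝ) := by
    rw [Nat.cast_sub (by omega)]; simp
  have h1 : (1 - (q : ℝ)⁻¹) = ((q : ℝ) - 1) / q := by field_simp
  calc (1 - (q : ℝ)⁻¹) ^ n * (Q : ℝ) ^ n
      = ((q : ℝ) - 1) ^ n / (q : ℝ) ^ n * ((Kc : ℝ) * (q : ℝ) ^ n) := by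
        rw [h1, div_pow, hQR]
    _ = (Kc : ℝ) * ((q : ℝ) - 1) ^ n := by field_simp
    _ = ((Kc * (q - 1) ^ n : ℕ) : ℝ) := by rw [hcast]; push_cast; ring
    _ ≤ _ := Nat.cast_le.mpr hchain

/-- Let `o` be a discrete valuation ring with maximal ideal `p` and finite residue field of
cardinality `q`, let `q0 = p^m` (`m ≥ 1`) with `Q = [o : q0]`, and let `τ ∈ Mat_n(o/q0)` be a
cyclic matrix.  Then the centralizer group `G_τ(o/q0) = {g ∈ GL_n(o/q0) : gτ = τg}` has
cardinality at least `(1 - q⁻¹)^n · Q^n`. -/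
theorem stmt_19 (n : ℕ) (o : Type*) [CommRing o] [IsDomain o] [IsDiscreteValuationRing o]
    [Fintype (IsLocalRing.ResidueField o)] (q : ℕ)
    (hq : Fintype.card (IsLocalRing.ResidueField o) = q)
    (m : ℕ) (hm : 1 ≤ m)
    [Fintype (o ⧸ (IsLocalRing.maximalIdeal o ^ m))] (Q : ℕ)
    (hQ : Fintype.card (o ⧸ (IsLocalRing.maximalIdeal o ^ m)) = Q)
    (τ : Matrix (Fin n) (Fin n) (o ⧸ (IsLocalRing.maximalIdeal o ^ m)))
    (hτ : ∃ v : Fin n → o ⧸ (IsLocalRing.maximalIdeal o ^ m),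
      ∀ w, ∃ p : Polynomial (o ⧸ (IsLocalRing.maximalIdeal o ^ m)),
        (Polynomial.aeval τ p).mulVec v = w) :
    (1 - (q : ℝ)⁻¹) ^ n * (Q : ℝ) ^ n ≤
      (Set.ncard {g : Matrix (Fin n) (Fin n) (o ⧸ (IsLocalRing.maximalIdeal o ^ m)) |
        IsUnit g ∧ g * τ = τ * g} : ℝ) := by
  classical
  have hq2 : 2 ≤ q := by rw [← hq]; exact Fintype.one_lt_card
  rcases Nat.eq_zero_or_pos n with rfl | hn
  · simp only [pow_zero, one_mul]
    have hne : ({g : Matrix (Fin 0) (Fin 0) (o ⧸ (IsLocalRing.maximalIdeal o ^ m)) |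
        IsUnit g ∧ g * τ = τ * g}).Nonempty := ⟨1, isUnit_one, by rw [one_mul, mul_one]⟩
    have hpos := (Set.ncard_pos (Set.toFinite _)).mpr hne
    exact_mod_cast hpos
  have hpm_le : (IsLocalRing.maximalIdeal o) ^ m ≤ IsLocalRing.maximalIdeal o :=
    Ideal.pow_le_self (by omega)
  have hntR : Nontrivial (o ⧸ (IsLocalRing.maximalIdeal o ^ m)) := by
    refine Ideal.Quotient.nontrivial_iff.mpr ?_
    intro htop
    exact (Ideal.IsMaximal.ne_top (IsLocalRing.maximalIdeal.isMaximal o))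
      (top_le_iff.mp (htop ▸ hpm_le))
  have hlocR : IsLocalRing (o ⧸ (IsLocalRing.maximalIdeal o ^ m)) :=
    IsLocalRing.of_surjective' (Ideal.Quotient.mk _) Ideal.Quotient.mk_surjective
  have e2 : ((o ⧸ (IsLocalRing.maximalIdeal o ^ m)) ⧸
        ((IsLocalRing.maximalIdeal o).map (Ideal.Quotient.mk (IsLocalRing.maximalIdeal o ^ m))))
      ≃+* o ⧸ IsLocalRing.maximalIdeal o :=
    DoubleQuot.quotQuotEquivQuotOfLE hpm_le
  have hfieldo : IsField (o ⧸ IsLocalRing.maximalIdeal o) :=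
    Field.toIsField (IsLocalRing.ResidueField o)
  have hmaxmap : (Ideal.map (Ideal.Quotient.mk (IsLocalRing.maximalIdeal o ^ m))
      (IsLocalRing.maximalIdeal o)).IsMaximal :=
    Ideal.Quotient.maximal_of_isField _ (e2.toMulEquiv.isField hfieldo)
  have hmax : Ideal.map (Ideal.Quotient.mk (IsLocalRing.maximalIdeal o ^ m))
        (IsLocalRing.maximalIdeal o)
      = IsLocalRing.maximalIdeal (o ⧸ (IsLocalRing.maximalIdeal o ^ m)) :=
    IsLocalRing.eq_maximalIdeal hmaxmap
  have eRes : IsLocalRing.ResidueField (o ⧸ (IsLocalRing.maximalIdeal o ^ m))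
      ≃+* IsLocalRing.ResidueField o :=
    (Ideal.quotEquivOfEq hmax.symm).trans e2
  have hfink : Finite (IsLocalRing.ResidueField (o ⧸ (IsLocalRing.maximalIdeal o ^ m))) :=
    Finite.of_equiv _ eRes.toEquiv.symm
  have hqcard : Nat.card (IsLocalRing.ResidueField (o ⧸ (IsLocalRing.maximalIdeal o ^ m))) = q := by
    rw [Nat.card_congr eRes.toEquiv, Nat.card_eq_fintype_card, hq]
  refine general_bound _ _ (IsLocalRing.residue _) Ideal.Quotient.mk_surjective ?_
    q Q hq2 hqcard hQ n hn τ hτ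
  intro x hx
  by_contra hxu
  have hmem : IsLocalRing.residue _ x = 0 :=
    Ideal.Quotient.eq_zero_iff_mem.mpr ((IsLocalRing.mem_maximalIdeal x).mpr (mem_nonunits_iff.mpr hxu))
  rw [hmem, isUnit_zero_iff] at hx
  exact zero_ne_one hx
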